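/- For δ ∈ (0, 1/2) and p_δ = 1 − 2δ, as δ → 0 one has Σ_MBAR = 2p_δ/δ → ∞ (it is Θ(δ^{−1})), while for each fixed δ, Σ_TSS^ν = 4p_δ + 8p_δ^{ν+1}/(1 − p_δ^ν) → 4p_δ as ν → ∞; in particular for every δ there exists N such that Σ_TSS^N ≤ 4p_δ + 1 = O(1). -/

import Mathlib

noncomputable def sigmaMBAR (δ : ℝ) : ℝ := 2 * (1 - 2 * δ) / δ

noncomputable def sigmaTSS (δ : ℝ) (ν : ℕ) : ℝ :=
  4 * (1 - 2 * δ) + 8 * (1 - 2 * δ) ^ (ν + 1) / (1 - (1 - 2 * δ) ^ ν)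

lemma tss_tendsto {δ : ℝ} (hδ : δ ∈ Set.Ioo (0 : ℝ) (1 / 2)) :
    Filter.Tendsto (fun ν : ℕ => sigmaTSS δ ν) Filter.atTop
      (nhds (4 * (1 - 2 * δ))) := by
  obtain ⟨h0, h1⟩ := hδ
  set r := 1 - 2 * δ with hr
  have hr0 : 0 ≤ r := by simp [hr]; linarith
  have hr1 : r < 1 := by simp [hr]; linarith
  have hpow : Filter.Tendsto (fun ν : ℕ => r ^ ν) Filter.atTop (nhds 0) :=
    tendsto_pow_atTop_nhds_zero_of_lt_one hr0 hr1
  have hpow1 : Filter.Tendsto (fun ν : ℕ => r ^ (ν + 1)) Filter.atTop (nhds 0) := by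
    have := hpow.comp (Filter.tendsto_add_atTop_nat 1)
    simpa [Function.comp_def] using this
  have hden : Filter.Tendsto (fun ν : ℕ => 1 - r ^ ν) Filter.atTop (nhds 1) := by
    simpa using (tendsto_const_nhds.sub hpow)
  have hdiv : Filter.Tendsto (fun ν : ℕ => 8 * r ^ (ν + 1) / (1 - r ^ ν))
      Filter.atTop (nhds 0) := by
    have := ((hpow1.const_mul (8:ℝ)).div hden one_ne_zero)
    simpa [mul_comm, Pi.div_def] using this
  have h := (tendsto_const_nhds (x := 4 * r) (α := ℕ)).add hdiv
  simpa [sigmaTSS, ← hr] using h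

theorem tss_variance_bounded_as_overlap_vanishes :
    Filter.Tendsto sigmaMBAR (nhdsWithin 0 (Set.Ioo (0 : ℝ) (1 / 2))) Filter.atTop ∧
    (∀ δ ∈ Set.Ioo (0 : ℝ) (1 / 2),
      Filter.Tendsto (fun ν : ℕ => sigmaTSS δ ν) Filter.atTop
        (nhds (4 * (1 - 2 * δ)))) ∧
    (∀ δ ∈ Set.Ioo (0 : ℝ) (1 / 2),
      ∃ N : ℕ, sigmaTSS δ N ≤ 4 * (1 - 2 * δ) + 1) := by
  refine ⟨?_, fun δ hδ => tss_tendsto hδ, fun δ hδ => ?_⟩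
  · have hinv : Filter.Tendsto (fun δ : ℝ => 2 * δ⁻¹ - 4)
        (nhdsWithin 0 (Set.Ioo (0 : ℝ) (1 / 2))) Filter.atTop := by
      apply Filter.tendsto_atTop_add_const_right
      apply Filter.Tendsto.const_mul_atTop (by norm_num : (0:ℝ) < 2)
      exact tendsto_inv_nhdsGT_zero.mono_left
        (nhdsWithin_mono 0 (fun x hx => hx.1))
    refine hinv.congr' ?_
    filter_upwards [self_mem_nhdsWithin] with x hx
    have hx0 : x ≠ 0 := ne_of_gt hx.1
    field_simp [sigmaMBAR]
    rw [sigmaMBAR]; field_simp; ring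
  · have h := (tss_tendsto hδ).eventually_lt_const
      (by linarith : 4 * (1 - 2 * δ) < 4 * (1 - 2 * δ) + 1)
    obtain ⟨N, hN⟩ := h.exists
    exact ⟨N, hN.le⟩
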